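/- Let λ ∈ (0,1), ν ≠ 0, δ ≠ 0 with δν > 0. Then for every n ≥ 1, the four eigenvalues of the matrix Π·Df_n (Arnold-model case: Π with rows (1,0,0,0),(0,1,0,0),(δ,0,1,0),(0,0,0,1), Df_n with rows (1,0,nν,0),(0,λ^n,0,0),(0,0,1,0),(0,0,0,λ^{−n})) are real, and exactly two of them have absolute value > 1 while the other two have absolute value < 1. -/

import Mathlib

open Matrix Polynomial

set_option maxHeartbeats 1000000 in
theorem det_fin_four' {R : Type*} [CommRing R] (M : Matrix (Fin 4) (Fin 4) R) :
    M.det =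
      M 0 0 * (M 1 1 * (M 2 2 * M 3 3 - M 2 3 * M 3 2)
              - M 1 2 * (M 2 1 * M 3 3 - M 2 3 * M 3 1)
              + M 1 3 * (M 2 1 * M 3 2 - M 2 2 * M 3 1))
    - M 0 1 * (M 1 0 * (M 2 2 * M 3 3 - M 2 3 * M 3 2)
              - M 1 2 * (M 2 0 * M 3 3 - M 2 3 * M 3 0)
              + M 1 3 * (M 2 0 * M 3 2 - M 2 2 * M 3 0))
    + M 0 2 * (M 1 0 * (M 2 1 * M 3 3 - M 2 3 * M 3 1)
              - M 1 1 * (M 2 0 * M 3 3 - M 2 3 * M 3 0)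
              + M 1 3 * (M 2 0 * M 3 1 - M 2 1 * M 3 0))
    - M 0 3 * (M 1 0 * (M 2 1 * M 3 2 - M 2 2 * M 3 1)
              - M 1 1 * (M 2 0 * M 3 2 - M 2 2 * M 3 0)
              + M 1 2 * (M 2 0 * M 3 1 - M 2 1 * M 3 0)) := by
  rw [Matrix.det_succ_row_zero]
  simp [Fin.sum_univ_succ, Matrix.det_fin_three, Matrix.submatrix, Fin.succAbove]
  ring

set_option maxHeartbeats 1000000 in
set_option maxRecDepth 8000 in
theorem stmt_17 (lam ν δ : ℝ) (hlam : 0 < lam ∧ lam < 1) (hν : ν ≠ 0) (hδ : δ ≠ 0)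
    (hδν : δ * ν > 0) :
    ∀ n : ℕ, 1 ≤ n →
      ∀ Pi' Df : Matrix (Fin 4) (Fin 4) ℝ,
        Pi' = !![1,0,0,0; 0,1,0,0; δ,0,1,0; 0,0,0,1] →
        Df = !![1,0,(n:ℝ)*ν,0; 0,lam^n,0,0; 0,0,1,0; 0,0,0,(lam^n)⁻¹] →
        ∃ x₁ x₂ x₃ x₄ : ℝ,
          (Pi' * Df).charpoly = (X - C x₁) * (X - C x₂) * (X - C x₃) * (X - C x₄) ∧
          |x₁| > 1 ∧ |x₂| > 1 ∧ |x₃| < 1 ∧ |x₄| < 1 := by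
  obtain ⟨hl0, hl1⟩ := hlam
  intro n hn Pi' Df hPi hDf
  set a : ℝ := lam ^ n with ha
  have ha0 : 0 < a := pow_pos hl0 n
  have ha1 : a < 1 := pow_lt_one₀ hl0.le hl1 (by omega)
  set S : ℝ := δ * ((n:ℝ) * ν) + 2 with hS
  have hnpos : (0:ℝ) < (n:ℝ) := by exact_mod_cast Nat.pos_of_ne_zero (by omega)
  have hS2 : 2 < S := by
    have : 0 < δ * ((n:ℝ) * ν) := by nlinarith
    linarith
  set D : ℝ := Real.sqrt (S^2 - 4) with hD
  have hD0 : 0 ≤ D := Real.sqrt_nonneg _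
  have hDsq : D^2 = S^2 - 4 := Real.sq_sqrt (by nlinarith)
  set u : ℝ := (S + D)/2 with hu
  set v : ℝ := (S - D)/2 with hv
  have huv : u * v = 1 := by
    have : u * v = (S^2 - D^2)/4 := by rw [hu, hv]; ring
    rw [this, hDsq]; ring
  have husum : u + v = S := by rw [hu, hv]; ring
  have hu1 : 1 < u := by rw [hu]; nlinarith
  have hv0 : 0 < v := by nlinarith
  have hv1 : v < 1 := by nlinarith
  refine ⟨u, a⁻¹, v, a, ?_, ?_, ?_, ?_, ?_⟩
  · have hM : Pi' * Df = !![1,0,(n:ℝ)*ν,0; 0,a,0,0; δ,0,δ*((n:ℝ)*ν)+1,0; 0,0,0,a⁻¹] := by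
      subst hPi hDf
      ext i j
      fin_cases i <;> fin_cases j <;>
        simp [Matrix.mul_apply, Fin.sum_univ_four, Matrix.vecHead, Matrix.vecTail]
    rw [hM, Matrix.charpoly, det_fin_four']
    have hCa : C a * C a⁻¹ = 1 := by
      rw [← C_mul, mul_inv_cancel₀ ha0.ne', C_1]
    have hCuv : C u * C v = 1 := by rw [← C_mul, huv, C_1]
    have hC2 : (C (2:ℝ)) = 2 := map_ofNat C 2
    have hCsum : C u + C v = C δ * ((n : ℝ[X]) * C ν) + 2 := by
      rw [← C_add, husum, hS]
      simp [C_add, C_mul, hC2]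
    simp [charmatrix_apply, Matrix.one_apply, smul_eq_C_mul, Matrix.vecHead, Matrix.vecTail,
      C_add, C_mul, Polynomial.C_eq_natCast, map_natCast]
    linear_combination (X - C a) * (X - C a⁻¹) * X * hCsum - (X - C a) * (X - C a⁻¹) * hCuv
  · rwa [abs_of_pos (by linarith)]
  · rw [abs_of_pos (by positivity)]
    exact one_lt_inv_iff₀.mpr ⟨ha0, ha1⟩
  · rwa [abs_of_pos hv0]
  · rwa [abs_of_pos ha0]
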